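/- For bounded operators T₁, T₂ on a complex Hilbert space H, the numerical radius of the block operator [[T₂, −T₁],[T₁, T₂]] on H ⊕ H equals max{w(T₁ + iT₂), w(T₁ − iT₂)}. -/

import Mathlib

noncomputable def numRadius {E : Type*} [NormedAddCommGroup E] [InnerProductSpace ℂ E]
    (T : E →L[ℂ] E) : ℝ :=
  sSup {r : ℝ | ∃ x : E, ‖x‖ = 1 ∧ r = ‖(inner ℂ (T x) x : ℂ)‖}

noncomputable def blockOp {H : Type*} [NormedAddCommGroup H] [InnerProductSpace ℂ H]
    (n : ℕ) (M : Fin n → Fin n → H →L[ℂ] H) :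
    (PiLp 2 fun _ : Fin n => H) →L[ℂ] (PiLp 2 fun _ : Fin n => H) :=
  (PiLp.continuousLinearEquiv 2 ℂ (fun _ : Fin n => H)).symm.toContinuousLinearMap ∘L
    (ContinuousLinearMap.pi fun i => ∑ j, (M i j).comp (ContinuousLinearMap.proj j)) ∘L
    (PiLp.continuousLinearEquiv 2 ℂ (fun _ : Fin n => H)).toContinuousLinearMap

set_option linter.unusedSectionVars false

variable {H : Type*} [NormedAddCommGroup H] [InnerProductSpace ℂ H]

namespace Stmt7Aux

open Complex ComplexConjugate

noncomputable def cc : ℂ := ((Real.sqrt 2 : ℝ) : ℂ)⁻¹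

lemma cc_mul : cc * cc = (2:ℂ)⁻¹ := by
  rw [cc, ← mul_inv, ← Complex.ofReal_mul, Real.mul_self_sqrt (by norm_num : (0:ℝ) ≤ 2)]
  norm_num

lemma cc_conj : conj cc = cc := by
  rw [cc, map_inv₀, Complex.conj_ofReal]

lemma cc_norm_sq : ‖cc‖ ^ 2 = (2:ℝ)⁻¹ := by
  rw [cc, norm_inv, Complex.norm_real, Real.norm_eq_abs,
    _root_.abs_of_nonneg (Real.sqrt_nonneg 2), inv_pow, Real.sq_sqrt (by norm_num : (0:ℝ) ≤ 2)]

lemma two_cc_norm_sq : ‖2 * cc‖ ^ 2 = 2 := by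
  rw [norm_mul, mul_pow, cc_norm_sq]
  norm_num

lemma two_cc_conj : conj (2 * cc) = 2 * cc := by
  rw [map_mul, cc_conj, map_ofNat]

lemma two_cc_mul : (2 * cc) * (2 * cc) = 2 := by
  rw [show (2*cc)*(2*cc) = 4 * (cc * cc) by ring, cc_mul]
  norm_num

lemma block_inner (T₁ T₂ : H →L[ℂ] H) (x : PiLp 2 fun _ : Fin 2 => H) :
    (inner ℂ (blockOp 2 !![T₂, -T₁; T₁, T₂] x) x : ℂ)
      = inner ℂ (T₂ (x 0) - T₁ (x 1)) (x 0) + inner ℂ (T₁ (x 0) + T₂ (x 1)) (x 1) := by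
  simp [blockOp, PiLp.inner_apply, Fin.sum_univ_two, ContinuousLinearMap.pi_apply,
    ContinuousLinearMap.proj_apply, ContinuousLinearMap.sum_apply, sub_eq_add_neg,
    inner_add_left, inner_neg_left]

lemma norm_sq_two (x : PiLp 2 fun _ : Fin 2 => H) : ‖x‖ ^ 2 = ‖x 0‖ ^ 2 + ‖x 1‖ ^ 2 := by
  rw [PiLp.norm_sq_eq_of_L2, Fin.sum_univ_two]

lemma core (T₁ T₂ : H →L[ℂ] H) (x₁ x₂ : H) :
    (inner ℂ ((T₂ + Complex.I • T₁) (x₁ + Complex.I • x₂)) (x₁ + Complex.I • x₂) : ℂ)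
      + inner ℂ ((T₂ - Complex.I • T₁) (x₁ - Complex.I • x₂)) (x₁ - Complex.I • x₂)
      = 2 * (inner ℂ (T₂ x₁ - T₁ x₂) x₁ + inner ℂ (T₁ x₁ + T₂ x₂) x₂) := by
  simp only [ContinuousLinearMap.add_apply, ContinuousLinearMap.sub_apply,
    ContinuousLinearMap.smul_apply, map_add, map_sub, map_smul, inner_add_left,
    inner_add_right, inner_sub_left, inner_sub_right, inner_smul_left, inner_smul_right,
    Complex.conj_I]
  ring_nf
  simp only [Complex.I_sq]
  ring

lemma norm_core (x₁ x₂ : H) : ‖x₁ + Complex.I • x₂‖ ^ 2 + ‖x₁ - Complex.I • x₂‖ ^ 2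
    = 2 * (‖x₁‖ ^ 2 + ‖x₂‖ ^ 2) := by
  have := parallelogram_law_with_norm ℂ x₁ (Complex.I • x₂)
  have h2 : ‖Complex.I • x₂‖ = ‖x₂‖ := by rw [norm_smul, Complex.norm_I, one_mul]
  rw [h2] at this
  nlinarith [this]

lemma bddAbove_set (T : H →L[ℂ] H) :
    BddAbove {r : ℝ | ∃ x : H, ‖x‖ = 1 ∧ r = ‖(inner ℂ (T x) x : ℂ)‖} := by
  refine ⟨‖T‖, ?_⟩
  rintro r ⟨x, hx, rfl⟩
  calc ‖(inner ℂ (T x) x : ℂ)‖ ≤ ‖T x‖ * ‖x‖ := norm_inner_le_norm _ _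
    _ ≤ ‖T‖ * ‖x‖ * ‖x‖ := by
        have := T.le_opNorm x
        nlinarith [norm_nonneg x, norm_nonneg (T x)]
    _ = ‖T‖ := by rw [hx]; ring

lemma unit_bound (T : H →L[ℂ] H) {x : H} (hx : ‖x‖ = 1) :
    ‖(inner ℂ (T x) x : ℂ)‖ ≤ numRadius T :=
  le_csSup (bddAbove_set T) ⟨x, hx, rfl⟩

lemma sq_bound (T : H →L[ℂ] H) (u : H) :
    ‖(inner ℂ (T u) u : ℂ)‖ ≤ ‖u‖ ^ 2 * numRadius T := by
  rcases eq_or_ne u 0 with rfl | hu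
  · simp
  · have ht : (0:ℝ) < ‖u‖ := norm_pos_iff.mpr hu
    set w : H := ((‖u‖⁻¹ : ℝ) : ℂ) • u with hw
    have hwn : ‖w‖ = 1 := by
      rw [hw, norm_smul, Complex.norm_real, Real.norm_eq_abs,
        _root_.abs_of_nonneg (inv_nonneg.mpr ht.le), inv_mul_cancel₀ ht.ne']
    have hInner : (inner ℂ (T w) w : ℂ) = ((‖u‖⁻¹:ℝ):ℂ) * (((‖u‖⁻¹:ℝ):ℂ) * inner ℂ (T u) u) := by
      rw [hw, map_smul, inner_smul_left, inner_smul_right, Complex.conj_ofReal]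
    have hbound := unit_bound T hwn
    rw [hInner] at hbound
    have hnorm : ‖((‖u‖⁻¹:ℝ):ℂ) * (((‖u‖⁻¹:ℝ):ℂ) * (inner ℂ (T u) u : ℂ))‖
        = ‖u‖⁻¹ * (‖u‖⁻¹ * ‖(inner ℂ (T u) u : ℂ)‖) := by
      rw [norm_mul, norm_mul, Complex.norm_real, Real.norm_eq_abs,
        _root_.abs_of_nonneg (inv_nonneg.mpr ht.le)]
    rw [hnorm] at hbound
    have hmul := mul_le_mul_of_nonneg_left hbound (sq_nonneg ‖u‖)
    have hkey : ‖u‖ ^ 2 * (‖u‖⁻¹ * (‖u‖⁻¹ * ‖(inner ℂ (T u) u : ℂ)‖))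
        = ‖(inner ℂ (T u) u : ℂ)‖ := by
      field_simp
    linarith [hmul, hkey.ge, hkey.le]

lemma numRadius_smul (c : ℂ) (hc : ‖c‖ = 1) (T : H →L[ℂ] H) :
    numRadius (c • T) = numRadius T := by
  unfold numRadius
  congr 1
  ext r
  have key : ∀ x : H, ‖(inner ℂ ((c • T) x) x : ℂ)‖ = ‖(inner ℂ (T x) x : ℂ)‖ := by
    intro x
    rw [ContinuousLinearMap.smul_apply, inner_smul_left, norm_mul, RCLike.norm_conj, hc, one_mul]
  constructor
  · rintro ⟨x, hx, rfl⟩; exact ⟨x, hx, (key x)⟩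
  · rintro ⟨x, hx, rfl⟩; exact ⟨x, hx, (key x).symm⟩

noncomputable def mk2 (a b : H) : PiLp 2 fun _ : Fin 2 => H := (WithLp.equiv 2 _).symm ![a, b]

@[simp] lemma mk2_zero (a b : H) : mk2 a b 0 = a := rfl
@[simp] lemma mk2_one (a b : H) : mk2 a b 1 = b := rfl

end Stmt7Aux

open Stmt7Aux Complex ComplexConjugate in
theorem stmt7 (T₁ T₂ : H →L[ℂ] H) :
    numRadius (blockOp 2 !![T₂, -T₁; T₁, T₂]) =
      max (numRadius (T₁ + Complex.I • T₂)) (numRadius (T₁ - Complex.I • T₂)) := by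
  rcases subsingleton_or_nontrivial H with hH | hH
  · have hzero : ∀ (E : Type _) [NormedAddCommGroup E] [InnerProductSpace ℂ E]
        [Subsingleton E], ∀ T : E →L[ℂ] E, numRadius T = 0 := by
      intro E _ _ _ T
      unfold numRadius
      have : {r : ℝ | ∃ x : E, ‖x‖ = 1 ∧ r = ‖(inner ℂ (T x) x : ℂ)‖} = ∅ := by
        rw [Set.eq_empty_iff_forall_notMem]
        rintro r ⟨x, hx, -⟩
        rw [Subsingleton.elim x 0, norm_zero] at hx
        exact one_ne_zero hx.symm
      rw [this, Real.sSup_empty]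
    have hsub : Subsingleton (PiLp 2 fun _ : Fin 2 => H) := by
      constructor; intro a b; apply (WithLp.equiv 2 _).injective; funext i; exact Subsingleton.elim _ _
    rw [hzero _ _, hzero _ _, hzero _ _, max_self]
  · obtain ⟨e, he⟩ : ∃ e : H, ‖e‖ = 1 := exists_norm_eq H zero_le_one
    set A := T₂ + Complex.I • T₁ with hA
    set B := T₂ - Complex.I • T₁ with hB
    set SP : Set ℝ := {r : ℝ | ∃ u v : H, ‖u‖ ^ 2 + ‖v‖ ^ 2 = 1 ∧
      r = ‖(inner ℂ (A u) u + inner ℂ (B v) v : ℂ)‖} with hSP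
    have step1 : numRadius (blockOp 2 !![T₂, -T₁; T₁, T₂]) = sSup SP := by
      unfold numRadius
      congr 1
      ext r
      constructor
      · rintro ⟨x, hx, rfl⟩
        refine ⟨cc • (x 0 + Complex.I • x 1), cc • (x 0 - Complex.I • x 1), ?_, ?_⟩
        · have h1 : ‖x‖ ^ 2 = 1 := by rw [hx]; norm_num
          rw [norm_sq_two] at h1
          rw [norm_smul, norm_smul, mul_pow, mul_pow, cc_norm_sq]
          linarith [norm_core (x 0) (x 1)]
        · congr 1
          rw [map_smul, inner_smul_left, inner_smul_right, map_smul, inner_smul_left,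
            inner_smul_right, cc_conj]
          have hcore := core T₁ T₂ (x 0) (x 1)
          rw [← hA, ← hB] at hcore
          rw [block_inner, ← mul_assoc, ← mul_assoc, cc_mul, ← mul_add, hcore,
            ← mul_assoc, inv_mul_cancel₀ (two_ne_zero), one_mul]
      · rintro ⟨u, v, huv, rfl⟩
        set x₁ : H := cc • (u + v) with hx₁
        set x₂ : H := cc • (Complex.I • (v - u)) with hx₂
        have hIcI : Complex.I * cc * Complex.I = -cc := by
          rw [mul_comm Complex.I cc, mul_assoc, Complex.I_mul_I, mul_neg_one]
        have e1 : x₁ + Complex.I • x₂ = (2 * cc) • u := by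
          rw [hx₁, hx₂, smul_smul, smul_smul, hIcI]
          module
        have e2 : x₁ - Complex.I • x₂ = (2 * cc) • v := by
          rw [hx₁, hx₂, smul_smul, smul_smul, hIcI]
          module
        refine ⟨mk2 x₁ x₂, ?_, ?_⟩
        · have hsq : ‖mk2 x₁ x₂‖ ^ 2 = 1 := by
            rw [norm_sq_two, mk2_zero, mk2_one]
            have hpar := norm_core x₁ x₂
            rw [e1, e2, norm_smul, norm_smul, mul_pow, mul_pow, two_cc_norm_sq] at hpar
            linarith
          exact (pow_left_inj₀ (norm_nonneg _) zero_le_one two_ne_zero).mp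
            (by rw [hsq]; norm_num)
        · congr 1
          rw [block_inner]
          have hcore := core T₁ T₂ x₁ x₂
          rw [← hA, ← hB, e1, e2] at hcore
          rw [map_smul, inner_smul_left, inner_smul_right, map_smul, inner_smul_left,
            inner_smul_right, two_cc_conj] at hcore
          have key2 : (2:ℂ) * ((inner ℂ (A u) u : ℂ) + inner ℂ (B v) v)
              = 2 * (inner ℂ (T₂ x₁ - T₁ x₂) x₁ + inner ℂ (T₁ x₁ + T₂ x₂) x₂) := by
            calc (2:ℂ) * ((inner ℂ (A u) u : ℂ) + inner ℂ (B v) v)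
                = ((2*cc)*(2*cc)) * ((inner ℂ (A u) u : ℂ) + inner ℂ (B v) v) := by
                  rw [two_cc_mul]
              _ = 2*cc*(2*cc*(inner ℂ (A u) u : ℂ)) + 2*cc*(2*cc*(inner ℂ (B v) v : ℂ)) := by
                  ring
              _ = _ := hcore
          have key3 := mul_left_cancel₀ (two_ne_zero (α := ℂ)) key2
          rw [mk2_zero, mk2_one, key3]
    rw [step1]
    have hbA : 0 ≤ numRadius A := le_trans (norm_nonneg _) (unit_bound A he)
    have hbB : 0 ≤ numRadius B := le_trans (norm_nonneg _) (unit_bound B he)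
    have hSPne : SP.Nonempty :=
      ⟨‖(inner ℂ (A e) e + inner ℂ (B 0) 0 : ℂ)‖, e, 0, by simp [he], rfl⟩
    have hub : ∀ r ∈ SP, r ≤ max (numRadius A) (numRadius B) := by
      rintro r ⟨u, v, huv, rfl⟩
      have h1 := sq_bound A u
      have h2 := sq_bound B v
      have hM1 := mul_le_mul_of_nonneg_left (le_max_left (numRadius A) (numRadius B))
        (sq_nonneg ‖u‖)
      have hM2 := mul_le_mul_of_nonneg_left (le_max_right (numRadius A) (numRadius B))
        (sq_nonneg ‖v‖)
      calc ‖(inner ℂ (A u) u + inner ℂ (B v) v : ℂ)‖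
          ≤ ‖(inner ℂ (A u) u : ℂ)‖ + ‖(inner ℂ (B v) v : ℂ)‖ := norm_add_le _ _
        _ ≤ max (numRadius A) (numRadius B) := by
            have hsum : ‖u‖ ^ 2 * max (numRadius A) (numRadius B)
                + ‖v‖ ^ 2 * max (numRadius A) (numRadius B)
                = max (numRadius A) (numRadius B) := by rw [← add_mul, huv, one_mul]
            linarith
    have hbdd : BddAbove SP := ⟨max (numRadius A) (numRadius B), hub⟩
    have step2 : sSup SP = max (numRadius A) (numRadius B) := by
      apply le_antisymm
      · exact csSup_le hSPne hub
      · rw [max_le_iff]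
        constructor
        · unfold numRadius
          have hsubA : {r : ℝ | ∃ x : H, ‖x‖ = 1 ∧ r = ‖(inner ℂ (A x) x : ℂ)‖} ⊆ SP := by
            rintro r ⟨x, hx, rfl⟩
            exact ⟨x, 0, by simp [hx], by simp⟩
          exact csSup_le_csSup hbdd ⟨_, e, he, rfl⟩ hsubA
        · unfold numRadius
          have hsubB : {r : ℝ | ∃ x : H, ‖x‖ = 1 ∧ r = ‖(inner ℂ (B x) x : ℂ)‖} ⊆ SP := by
            rintro r ⟨x, hx, rfl⟩
            exact ⟨0, x, by simp [hx], by simp⟩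
          exact csSup_le_csSup hbdd ⟨_, e, he, rfl⟩ hsubB
    rw [step2]
    have hA' : A = Complex.I • (T₁ - Complex.I • T₂) := by
      rw [hA, smul_sub, smul_smul, Complex.I_mul_I, neg_one_smul, sub_neg_eq_add, add_comm]
    have hB' : B = (-Complex.I) • (T₁ + Complex.I • T₂) := by
      rw [hB, smul_add, smul_smul]
      rw [show -Complex.I * Complex.I = 1 by rw [neg_mul, Complex.I_mul_I]; ring]
      rw [one_smul, neg_smul, add_comm, sub_eq_add_neg]
    rw [hA', hB', numRadius_smul _ (by simp) _, numRadius_smul _ (by simp) _, max_comm]
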